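/- For monomial ideals $I, J \subseteq S$, the expansion operator satisfies $(I : J)^* = I^* : J^*$. -/

import Mathlib

open MvPolynomial

/-- The monomial ideal of `S = K[x_1,…,x_n]` generated by the monomials `x^a`, `a ∈ A`. -/
noncomputable def monIdeal (K : Type*) [Field K] {n : ℕ} (A : Set (Fin n → ℕ)) :
    Ideal (MvPolynomial (Fin n) K) :=
  Ideal.span ((fun a => ∏ j, (X j : MvPolynomial (Fin n) K) ^ a j) '' A)

/-- The expansion `I^* = ∑_{a ∈ A} P_1^{a(1)} ⋯ P_n^{a(n)} ⊆ S^*` of the monomial ideal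
generated by the monomials `x^a`, `a ∈ A`, with respect to the tuple `(i_1,…,i_n)`;
here `P_j = (x_{j1},…,x_{j i_j})`. -/
noncomputable def expIdeal (K : Type*) [Field K] {n : ℕ} (iv : Fin n → ℕ)
    (A : Set (Fin n → ℕ)) : Ideal (MvPolynomial ((j : Fin n) × Fin (iv j)) K) :=
  ⨆ a ∈ A, ∏ j, (Ideal.span (Set.range fun k : Fin (iv j) =>
      (X ⟨j, k⟩ : MvPolynomial ((j : Fin n) × Fin (iv j)) K))) ^ a j

/-- The `K`-algebra homomorphism `π : S^* → S`, `x_{jk} ↦ x_j`. -/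
noncomputable def piHom (K : Type*) [Field K] {n : ℕ} (iv : Fin n → ℕ) :
    MvPolynomial ((j : Fin n) × Fin (iv j)) K →ₐ[K] MvPolynomial (Fin n) K :=
  aeval fun p => X p.1

section Aux

variable (K : Type*) [Field K] {n : ℕ} (iv : Fin n → ℕ)

/-- column sums of an exponent in `S^*` -/
def sig (u : ((j : Fin n) × Fin (iv j)) →₀ ℕ) (j : Fin n) : ℕ :=
  ∑ k : Fin (iv j), u ⟨j, k⟩

variable {iv}

lemma sig_add (u v : ((j : Fin n) × Fin (iv j)) →₀ ℕ) (j : Fin n) :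
    sig iv (u + v) j = sig iv u j + sig iv v j := by
  simp [sig, Finset.sum_add_distrib]

lemma sig_mono {u v : ((j : Fin n) × Fin (iv j)) →₀ ℕ} (h : u ≤ v) (j : Fin n) :
    sig iv u j ≤ sig iv v j :=
  Finset.sum_le_sum fun k _ => Finsupp.le_def.mp h _

lemma prod_X_pow (a : Fin n → ℕ) :
    (∏ j, (X j : MvPolynomial (Fin n) K) ^ a j)
      = monomial (Finsupp.equivFunOnFinite.symm a) 1 := by
  rw [← prod_X_pow_eq_monomial]
  refine (Finset.prod_subset (Finset.subset_univ _) ?_).symm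
  intro x _ hx
  have : a x = 0 := by simpa [Finsupp.mem_support_iff] using hx
  simp [this]

lemma monIdeal_eq (A : Set (Fin n → ℕ)) :
    monIdeal K A = Ideal.span
      ((fun s => monomial s (1:K)) '' (Finsupp.equivFunOnFinite.symm '' A)) := by
  rw [monIdeal, Set.image_image]
  congr 1
  ext f
  constructor
  · rintro ⟨a, ha, rfl⟩; exact ⟨a, ha, (prod_X_pow K a).symm⟩
  · rintro ⟨a, ha, rfl⟩; exact ⟨a, ha, prod_X_pow K a⟩

lemma mem_monIdeal {A : Set (Fin n → ℕ)} {f : MvPolynomial (Fin n) K} :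
    f ∈ monIdeal K A ↔ ∀ d ∈ f.support, ∃ c ∈ A, ∀ j, c j ≤ d j := by
  rw [monIdeal_eq, mem_ideal_span_monomial_image]
  refine forall₂_congr fun d _ => ?_
  constructor
  · rintro ⟨_, ⟨c, hc, rfl⟩, h⟩
    exact ⟨c, hc, fun j => by simpa using Finsupp.le_def.mp h j⟩
  · rintro ⟨c, hc, h⟩
    exact ⟨_, ⟨c, hc, rfl⟩, Finsupp.le_def.mpr fun j => by simpa using h j⟩

variable (iv)

/-- the ideal `P_j` -/
noncomputable def Pj (j : Fin n) : Ideal (MvPolynomial ((j : Fin n) × Fin (iv j)) K) :=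
  Ideal.span (Set.range fun k : Fin (iv j) =>
    (X ⟨j, k⟩ : MvPolynomial ((j : Fin n) × Fin (iv j)) K))

/-- span of a set of monomials in `S^*` -/
noncomputable def MSpan (T : Set (((j : Fin n) × Fin (iv j)) →₀ ℕ)) :
    Ideal (MvPolynomial ((j : Fin n) × Fin (iv j)) K) :=
  Ideal.span ((fun u => monomial u (1:K)) '' T)

variable {K iv}

lemma mem_MSpan {T : Set (((j : Fin n) × Fin (iv j)) →₀ ℕ)}
    {f : MvPolynomial ((j : Fin n) × Fin (iv j)) K} :
    f ∈ MSpan K iv T ↔ ∀ u ∈ f.support, ∃ v ∈ T, v ≤ u :=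
  mem_ideal_span_monomial_image

lemma MSpan_mono {T U : Set (((j : Fin n) × Fin (iv j)) →₀ ℕ)} (h : T ⊆ U) :
    MSpan K iv T ≤ MSpan K iv U :=
  Ideal.span_mono (Set.image_mono h)

lemma top_le_MSpan {T : Set (((j : Fin n) × Fin (iv j)) →₀ ℕ)} (h0 : 0 ∈ T) :
    ⊤ ≤ MSpan K iv T := by
  rw [top_le_iff, Ideal.eq_top_iff_one]
  have : (1 : MvPolynomial ((j : Fin n) × Fin (iv j)) K) = monomial 0 1 := by simp
  rw [this]
  exact Ideal.subset_span ⟨0, h0, rfl⟩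

lemma MSpan_mul_le {S T U : Set (((j : Fin n) × Fin (iv j)) →₀ ℕ)}
    (h : ∀ s ∈ S, ∀ t ∈ T, s + t ∈ U) : MSpan K iv S * MSpan K iv T ≤ MSpan K iv U := by
  rw [MSpan, MSpan, Ideal.span_mul_span, Ideal.span_le]
  intro x hx
  simp only [Set.mem_mul] at hx
  obtain ⟨p, ⟨⟨s, hs, rfl⟩, q, ⟨t, ht, rfl⟩, rfl⟩⟩ := hx
  exact Ideal.subset_span ⟨s + t, h s hs t ht, by rw [monomial_mul, one_mul]⟩

lemma sig_single (j : Fin n) (k : Fin (iv j)) (m : ℕ) :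
    sig iv (Finsupp.single (⟨j, k⟩ : (j : Fin n) × Fin (iv j)) m) j = m := by
  simp [sig, Finsupp.single_apply, Sigma.mk.inj_iff]

lemma Pj_pow_le (j : Fin n) (m : ℕ) :
    (Pj K iv j) ^ m ≤ MSpan K iv {u | m ≤ sig iv u j} := by
  induction m with
  | zero => rw [pow_zero, Ideal.one_eq_top]; exact top_le_MSpan (by simp)
  | succ m ih =>
    rw [pow_succ]
    have hP : Pj K iv j ≤ MSpan K iv (Set.range fun k : Fin (iv j) =>
        Finsupp.single (⟨j, k⟩ : (j : Fin n) × Fin (iv j)) 1) := by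
      rw [Pj, MSpan, ← Set.range_comp]
      exact le_of_eq rfl
    refine le_trans (Ideal.mul_mono ih hP) (MSpan_mul_le ?_)
    rintro s hs _ ⟨k, rfl⟩
    have := sig_single j k 1
    have h2 := sig_add s (Finsupp.single (⟨j, k⟩ : (j : Fin n) × Fin (iv j)) 1) j
    simp only [Set.mem_setOf_eq] at hs ⊢
    omega

lemma prod_Pj_le (a : Fin n → ℕ) :
    (∏ j, (Pj K iv j) ^ a j) ≤ MSpan K iv {u | ∀ j, a j ≤ sig iv u j} := by
  have key : ∀ s : Finset (Fin n),
      (∏ j ∈ s, (Pj K iv j) ^ a j) ≤ MSpan K iv {u | ∀ j ∈ s, a j ≤ sig iv u j} := by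
    intro s
    induction s using Finset.cons_induction with
    | empty => rw [Finset.prod_empty, Ideal.one_eq_top]; exact top_le_MSpan (by simp)
    | cons j0 s hj0 ih =>
      rw [Finset.prod_cons]
      refine le_trans (Ideal.mul_mono (Pj_pow_le j0 (a j0)) ih) (MSpan_mul_le ?_)
      intro u hu v hv
      simp only [Set.mem_setOf_eq, Finset.mem_cons] at hu hv ⊢
      rintro j (rfl | hj)
      · have := sig_add u v j; omega
      · have := sig_add u v j; have := hv j hj; omega
  refine le_trans (key Finset.univ) (MSpan_mono ?_)
  intro u hu j
  exact hu j (Finset.mem_univ j)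

lemma select {m : ℕ} (w : Fin m → ℕ) (t : ℕ) (h : t ≤ ∑ k, w k) :
    ∃ g : Fin m → ℕ, (∀ k, g k ≤ w k) ∧ ∑ k, g k = t := by
  induction m generalizing t with
  | zero =>
    refine ⟨0, fun k => k.elim0, ?_⟩
    simp only [Finset.sum_const_zero, Pi.zero_apply]
    simpa using (Nat.le_zero.mp (by simpa using h)).symm
  | succ m ih =>
    rw [Fin.sum_univ_succ] at h
    by_cases h0 : t ≤ w 0
    · refine ⟨Fin.cons t 0, ?_, ?_⟩
      · intro k
        refine Fin.cases ?_ ?_ k <;> simp [h0]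
      · rw [Fin.sum_univ_succ]; simp
    · obtain ⟨g, hg, hsum⟩ := ih (fun k => w k.succ) (t - w 0) (by show t - w 0 ≤ ∑ k : Fin m, w k.succ; omega)
      refine ⟨Fin.cons (w 0) g, ?_, ?_⟩
      · intro k; refine Fin.cases ?_ ?_ k <;> simp [hg]
      · rw [Fin.sum_univ_succ]
        simp only [Fin.cons_zero, Fin.cons_succ]
        rw [hsum]
        omega

lemma select_sigma (u : ((j : Fin n) × Fin (iv j)) →₀ ℕ) (a : Fin n → ℕ)
    (h : ∀ j, a j ≤ sig iv u j) :
    ∃ v, v ≤ u ∧ ∀ j, sig iv v j = a j := by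
  choose g hg hsum using fun j => select (fun k => u ⟨j, k⟩) (a j) (h j)
  refine ⟨Finsupp.equivFunOnFinite.symm (fun p => g p.1 p.2), ?_, ?_⟩
  · rw [Finsupp.le_def]
    intro p
    simpa using hg p.1 p.2
  · intro j
    simpa [sig] using hsum j

lemma block_mem (j : Fin n) (m : ℕ) (w : ((j : Fin n) × Fin (iv j)) →₀ ℕ)
    (hsupp : ∀ p ∈ w.support, p.1 = j) (hs : sig iv w j = m) :
    monomial w (1:K) ∈ (Pj K iv j) ^ m := by
  induction m generalizing w with
  | zero =>
    have : w = 0 := by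
      ext p
      simp only [Finsupp.coe_zero, Pi.zero_apply]
      by_cases hp : p.1 = j
      · obtain ⟨j', k⟩ := p
        dsimp at hp; subst hp
        have hle : w ⟨j', k⟩ ≤ sig iv w j' :=
          Finset.single_le_sum (f := fun k => w ⟨j', k⟩) (fun _ _ => Nat.zero_le _)
            (Finset.mem_univ k)
        omega
      · by_contra hne
        exact hp (hsupp p (Finsupp.mem_support_iff.mpr hne))
    rw [this, pow_zero]
    simp [Ideal.one_eq_top]
  | succ m ih =>
    have hex : ∃ k : Fin (iv j), w ⟨j, k⟩ ≠ 0 := by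
      by_contra hcon
      push_neg at hcon
      have : sig iv w j = 0 := Finset.sum_eq_zero fun k _ => hcon k
      omega
    obtain ⟨k, hk⟩ := hex
    set s := Finsupp.single (⟨j, k⟩ : (j : Fin n) × Fin (iv j)) 1 with hs_def
    have hle : s ≤ w := Finsupp.single_le_iff.mpr (Nat.one_le_iff_ne_zero.mpr hk)
    have hw : w - s + s = w := tsub_add_cancel_of_le hle
    have hsig : sig iv (w - s) j = m := by
      have h1 := sig_add (w - s) s j
      rw [hw] at h1
      have h2 := sig_single j k 1
      rw [← hs_def] at h2
      omega
    have hsupp' : ∀ p ∈ (w - s).support, p.1 = j := by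
      intro p hp
      apply hsupp
      rw [Finsupp.mem_support_iff] at hp ⊢
      have : (w - s) p = w p - s p := Finsupp.tsub_apply w s p
      omega
    have hmem := ih (w - s) hsupp' hsig
    have hX : (X (⟨j, k⟩ : (j : Fin n) × Fin (iv j)) :
        MvPolynomial ((j : Fin n) × Fin (iv j)) K) ∈ Pj K iv j :=
      Ideal.subset_span ⟨k, rfl⟩
    have hmul := Ideal.mul_mem_mul hmem hX
    rw [← pow_succ] at hmul
    have hXs : (X (⟨j, k⟩ : (j : Fin n) × Fin (iv j)) :
        MvPolynomial ((j : Fin n) × Fin (iv j)) K) = monomial s 1 := rfl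
    rwa [hXs, monomial_mul, one_mul, hw] at hmul

lemma monomial_prod {ι : Type*} (s : Finset ι) (f : ι → (((j : Fin n) × Fin (iv j)) →₀ ℕ)) :
    (∏ i ∈ s, (monomial (f i) (1:K))) = monomial (∑ i ∈ s, f i) 1 := by
  induction s using Finset.cons_induction with
  | empty => simp
  | cons i s hi ih => rw [Finset.prod_cons, Finset.sum_cons, ih, monomial_mul, one_mul]

lemma mem_prod_of_sig (v : ((j : Fin n) × Fin (iv j)) →₀ ℕ) (a : Fin n → ℕ)
    (h : ∀ j, sig iv v j = a j) :
    monomial v (1:K) ∈ ∏ j, (Pj K iv j) ^ a j := by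
  classical
  set vf := fun j : Fin n => v.filter (fun p => p.1 = j) with hvf
  have hsum : ∑ j, vf j = v := by
    ext p
    rw [Finsupp.finset_sum_apply]
    simp only [hvf, Finsupp.filter_apply]
    rw [Finset.sum_ite_eq]
    simp
  have hrw : monomial v (1:K) = ∏ j, monomial (vf j) 1 := by
    rw [monomial_prod, hsum]
  rw [hrw]
  refine Ideal.prod_mem_prod fun j _ => block_mem j (a j) (vf j) ?_ ?_
  · intro p hp
    rw [Finsupp.mem_support_iff] at hp
    by_contra hne
    simp [hvf, Finsupp.filter_apply, hne] at hp
  · rw [← h j]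
    simp [sig, hvf, Finsupp.filter_apply]

lemma expIdeal_eq (A : Set (Fin n → ℕ)) :
    expIdeal K iv A = MSpan K iv {u | ∃ a ∈ A, ∀ j, a j ≤ sig iv u j} := by
  apply le_antisymm
  · refine iSup₂_le fun a ha => ?_
    refine le_trans (prod_Pj_le a) (MSpan_mono ?_)
    intro u hu
    exact ⟨a, ha, hu⟩
  · rw [MSpan, Ideal.span_le]
    rintro _ ⟨u, ⟨a, ha, hu⟩, rfl⟩
    obtain ⟨v, hvu, hv⟩ := select_sigma u a hu
    have hmem : monomial v (1:K) ∈ ∏ j, (Pj K iv j) ^ a j := mem_prod_of_sig v a hv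
    have heq : monomial u (1:K) = monomial (u - v) 1 * monomial v 1 := by
      rw [monomial_mul, one_mul, tsub_add_cancel_of_le hvu]
    have hle : (∏ j, (Pj K iv j) ^ a j) ≤ expIdeal K iv A := le_iSup₂_of_le a ha le_rfl
    show monomial u (1:K) ∈ (expIdeal K iv A : Set _)
    rw [SetLike.mem_coe, heq]
    exact hle (Ideal.mul_mem_left _ _ hmem)

lemma mem_expIdeal {A : Set (Fin n → ℕ)} {f : MvPolynomial ((j : Fin n) × Fin (iv j)) K} :
    f ∈ expIdeal K iv A ↔ ∀ u ∈ f.support, ∃ a ∈ A, ∀ j, a j ≤ sig iv u j := by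
  rw [expIdeal_eq, mem_MSpan]
  refine forall₂_congr fun u _ => ?_
  constructor
  · rintro ⟨v, ⟨a, ha, hav⟩, hvu⟩
    exact ⟨a, ha, fun j => le_trans (hav j) (sig_mono hvu j)⟩
  · rintro ⟨a, ha, hau⟩
    exact ⟨u, ⟨a, ha, hau⟩, le_rfl⟩

end Aux
section Main

variable {K : Type*} [Field K] {n : ℕ} {iv : Fin n → ℕ}

lemma monomial_mem_monIdeal {A : Set (Fin n → ℕ)} {d : Fin n → ℕ} :
    monomial (Finsupp.equivFunOnFinite.symm d) (1:K) ∈ monIdeal K A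
      ↔ ∃ c ∈ A, ∀ j, c j ≤ d j := by
  rw [mem_monIdeal]
  constructor
  · intro h
    obtain ⟨c, hc, hcd⟩ := h (Finsupp.equivFunOnFinite.symm d)
      (by classical rw [support_monomial, if_neg one_ne_zero]; exact Finset.mem_singleton_self _)
    exact ⟨c, hc, fun j => by simpa using hcd j⟩
  · rintro ⟨c, hc, hcd⟩ e he
    classical
    rw [support_monomial, if_neg one_ne_zero, Finset.mem_singleton] at he
    subst he
    exact ⟨c, hc, fun j => by simpa using hcd j⟩

lemma monomial_mem_colon {A B : Set (Fin n → ℕ)} {d : Fin n → ℕ} :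
    monomial (Finsupp.equivFunOnFinite.symm d) (1:K) ∈
      Submodule.colon (monIdeal K A) (monIdeal K B)
    ↔ ∀ b ∈ B, ∃ a ∈ A, ∀ j, a j ≤ d j + b j := by
  classical
  rw [Submodule.mem_colon]
  constructor
  · intro h b hb
    have hbB : monomial (Finsupp.equivFunOnFinite.symm b) (1:K) ∈ monIdeal K B :=
      monomial_mem_monIdeal.mpr ⟨b, hb, fun j => le_rfl⟩
    have hm := h _ hbB
    rw [smul_eq_mul, monomial_mul, one_mul] at hm
    have hdb : (Finsupp.equivFunOnFinite.symm d) + Finsupp.equivFunOnFinite.symm b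
        = Finsupp.equivFunOnFinite.symm (fun j => d j + b j) := by
      ext j; simp
    rw [hdb] at hm
    exact monomial_mem_monIdeal.mp hm
  · intro h p hp
    rw [smul_eq_mul, mem_monIdeal]
    intro e he
    have hsub := Finset.mem_of_subset (MvPolynomial.support_mul _ p) he
    rw [Finset.mem_add] at hsub
    obtain ⟨e1, he1, e2, he2, rfl⟩ := hsub
    rw [support_monomial, if_neg one_ne_zero, Finset.mem_singleton] at he1
    subst he1
    obtain ⟨b, hb, hbe⟩ := (mem_monIdeal K).mp hp e2 he2
    obtain ⟨a, ha, hab⟩ := h b hb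
    refine ⟨a, ha, fun j => ?_⟩
    have h1 := hab j
    have h2 := hbe j
    simp only [Finsupp.coe_add, Pi.add_apply, Finsupp.coe_equivFunOnFinite_symm]
    omega

end Main


/-- Lemma 1.1(v): `(I : J)^* = I^* : J^*`: if the monomial ideal generated by the monomials
`x^c`, `c ∈ C`, equals the colon ideal `I : J`, then its expansion is `I^* : J^*`. -/
theorem expIdeal_colon (K : Type*) [Field K] {n : ℕ} (iv : Fin n → ℕ)
    (hiv : ∀ j, 0 < iv j) (A B C : Set (Fin n → ℕ))
    (hC : monIdeal K C = Submodule.colon (monIdeal K A) (monIdeal K B)) :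
    expIdeal K iv C = Submodule.colon (expIdeal K iv A) (expIdeal K iv B) := by
  classical
  apply le_antisymm
  · intro f hf
    rw [Submodule.mem_colon]
    intro g hg
    rw [smul_eq_mul, mem_expIdeal]
    intro w hw
    have hsub := Finset.mem_of_subset (MvPolynomial.support_mul f g) hw
    rw [Finset.mem_add] at hsub
    obtain ⟨u, hu, v, hv, rfl⟩ := hsub
    obtain ⟨c, hcC, hcu⟩ := mem_expIdeal.mp hf u hu
    obtain ⟨b, hbB, hbv⟩ := mem_expIdeal.mp hg v hv
    have h1 : monomial (Finsupp.equivFunOnFinite.symm (sig iv u)) (1:K) ∈ monIdeal K C :=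
      monomial_mem_monIdeal.mpr ⟨c, hcC, hcu⟩
    rw [hC] at h1
    obtain ⟨a, haA, hab⟩ := monomial_mem_colon.mp h1 b hbB
    refine ⟨a, haA, fun j => ?_⟩
    have h2 := sig_add u v j
    have h3 := hbv j
    have h4 := hab j
    omega
  · intro f hf
    rw [mem_expIdeal]
    intro u hu
    have key : ∀ b ∈ B, ∃ a ∈ A, ∀ j, a j ≤ sig iv u j + b j := by
      intro b hb
      set e : ((j : Fin n) × Fin (iv j)) →₀ ℕ :=
        Finsupp.equivFunOnFinite.symm
          (fun p => if p.2 = ⟨0, hiv p.1⟩ then b p.1 else 0) with he_def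
      have hsige : ∀ j, sig iv e j = b j := by
        intro j
        simp only [sig, he_def, Finsupp.coe_equivFunOnFinite_symm]
        rw [Finset.sum_ite_eq' Finset.univ (⟨0, hiv j⟩ : Fin (iv j)) (fun _ => b j)]
        simp
      have hgB : monomial e (1:K) ∈ expIdeal K iv B := by
        rw [mem_expIdeal]
        intro w hw
        rw [support_monomial, if_neg one_ne_zero, Finset.mem_singleton] at hw
        subst hw
        exact ⟨b, hb, fun j => (hsige j).ge⟩
      have hmul := Submodule.mem_colon.mp hf _ hgB
      rw [smul_eq_mul] at hmul
      have hmem : u + e ∈ (f * monomial e (1:K)).support := by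
        rw [mem_support_iff, coeff_mul_monomial, mul_one]
        exact mem_support_iff.mp hu
      obtain ⟨a, haA, hau⟩ := mem_expIdeal.mp hmul _ hmem
      refine ⟨a, haA, fun j => ?_⟩
      have h1 := sig_add u e j
      have h2 := hsige j
      have h3 := hau j
      omega
    have h2 : monomial (Finsupp.equivFunOnFinite.symm (sig iv u)) (1:K) ∈
        Submodule.colon (monIdeal K A) (monIdeal K B) := monomial_mem_colon.mpr key
    rw [← hC] at h2
    exact monomial_mem_monIdeal.mp h2
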